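/- arXiv:2605.06212 — 2 statements merged into one kernel-verified Lean document; each statement's English description precedes it below -/
import Mathlib

section
/- For every z ∈ ℝ and σ > 0, if ε is a standard normal random variable then P(z + σ·ε > 0) = Φ(z/σ), and consequently the maximiser of π ↦ π·z + σ·φ(Φ⁻¹(π)) over π ∈ [0,1] is π* = Φ(z/σ). -/
open MeasureTheory ProbabilityTheory Filter

noncomputable section

/-- Standard normal density `φ`. -/
def stdGaussPDF (y : ℝ) : ℝ := (Real.sqrt (2 * Real.pi))⁻¹ * Real.exp (-(y ^ 2) / 2)

/-- Standard normal CDF `Φ`. -/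
def stdGaussCDF (z : ℝ) : ℝ := ∫ y in Set.Iic z, stdGaussPDF y

/-- Quantile function `Φ⁻¹`. -/
def stdGaussQuantile : ℝ → ℝ := Function.invFun stdGaussCDF

/-- Probit regulariser `H_Φ(p) = φ(Φ⁻¹(p))` on `(0,1)`, extended by `0` at the endpoints. -/
def probitReg (p : ℝ) : ℝ :=
  if p ≤ 0 ∨ 1 ≤ p then 0 else stdGaussPDF (stdGaussQuantile p)

lemma pdf_eq : stdGaussPDF = gaussianPDFReal 0 1 := by
  ext x
  simp [stdGaussPDF, gaussianPDFReal, neg_div]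

lemma pdf_pos (x : ℝ) : 0 < stdGaussPDF x := by
  rw [pdf_eq]; exact gaussianPDFReal_pos 0 1 x one_ne_zero

lemma pdf_cont : Continuous stdGaussPDF := by
  unfold stdGaussPDF; fun_prop

lemma pdf_integrable : Integrable stdGaussPDF := by
  rw [pdf_eq]; exact integrable_gaussianPDFReal 0 1

lemma pdf_total : ∫ x, stdGaussPDF x = 1 := by
  rw [pdf_eq]; exact integral_gaussianPDFReal_eq_one 0 one_ne_zero

lemma measure_toReal (s : Set ℝ) :
    (gaussianReal 0 1 s).toReal = ∫ x in s, stdGaussPDF x := by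
  rw [pdf_eq, gaussianReal_apply_eq_integral 0 one_ne_zero s, ENNReal.toReal_ofReal]
  exact integral_nonneg (fun x => gaussianPDFReal_nonneg 0 1 x)

lemma cdf_nonneg (t : ℝ) : 0 ≤ stdGaussCDF t :=
  setIntegral_nonneg measurableSet_Iic (fun x _ => (pdf_pos x).le)

lemma cdf_add_Ioi (t : ℝ) : stdGaussCDF t + ∫ x in Set.Ioi t, stdGaussPDF x = 1 := by
  rw [stdGaussCDF, intervalIntegral.integral_Iic_add_Ioi pdf_integrable.integrableOn pdf_integrable.integrableOn,
    pdf_total]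

lemma cdf_le_one (t : ℝ) : stdGaussCDF t ≤ 1 := by
  have h := cdf_add_Ioi t
  have h2 : 0 ≤ ∫ x in Set.Ioi t, stdGaussPDF x :=
    setIntegral_nonneg measurableSet_Ioi (fun x _ => (pdf_pos x).le)
  linarith

lemma cdf_symm (t : ℝ) : stdGaussCDF (-t) = 1 - stdGaussCDF t := by
  have h1 : stdGaussCDF (-t) = ∫ x in Set.Ioi t, stdGaussPDF x := by
    rw [stdGaussCDF]
    have he : ∀ x, stdGaussPDF x = stdGaussPDF (-x) := fun x => by simp [stdGaussPDF]
    calc ∫ x in Set.Iic (-t), stdGaussPDF x = ∫ x in Set.Iic (-t), stdGaussPDF (-x) :=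
          setIntegral_congr_fun measurableSet_Iic (fun x _ => he x)
      _ = ∫ x in Set.Ioi (-(-t)), stdGaussPDF x := integral_comp_neg_Iic _ _
      _ = ∫ x in Set.Ioi t, stdGaussPDF x := by rw [neg_neg]
  have h3 := cdf_add_Ioi t
  rw [h1]; linarith

lemma hasDerivAt_cdf (t : ℝ) : HasDerivAt stdGaussCDF (stdGaussPDF t) t := by
  have key : ∀ u : ℝ, stdGaussCDF u = stdGaussCDF 0 + ∫ x in (0:ℝ)..u, stdGaussPDF x := by
    intro u
    have := intervalIntegral.integral_Iic_sub_Iic (a := (0:ℝ)) (b := u) (f := stdGaussPDF)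
      pdf_integrable.integrableOn pdf_integrable.integrableOn
    rw [stdGaussCDF, stdGaussCDF]
    linarith
  have hd : HasDerivAt (fun u => ∫ x in (0:ℝ)..u, stdGaussPDF x) (stdGaussPDF t) t :=
    intervalIntegral.integral_hasDerivAt_right pdf_integrable.intervalIntegrable
      (pdf_cont.stronglyMeasurableAtFilter _ _) pdf_cont.continuousAt
  have := (hd.const_add (stdGaussCDF 0))
  exact this.congr_deriv rfl |>.congr_of_eventuallyEq (by filter_upwards with u; rw [key u]) |>.congr_deriv rfl

lemma cdf_cont : Continuous stdGaussCDF :=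
  (continuous_iff_continuousAt.mpr fun t => (hasDerivAt_cdf t).continuousAt)

lemma cdf_strictMono : StrictMono stdGaussCDF := by
  refine strictMono_of_deriv_pos (fun t => ?_)
  rw [(hasDerivAt_cdf t).deriv]; exact pdf_pos t

lemma cdf_tendsto_atTop : Tendsto stdGaussCDF atTop (nhds 1) := by
  have h1 : ∀ t, stdGaussCDF t = (gaussianReal 0 1 (Set.Iic t)).toReal := by
    intro t; rw [measure_toReal]; rfl
  have h2 := tendsto_measure_Iic_atTop (gaussianReal 0 1)
  have h3 : gaussianReal 0 1 Set.univ = 1 := measure_univ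
  rw [h3] at h2
  have h4 := (ENNReal.tendsto_toReal (by simp : (1:ENNReal) ≠ ⊤)).comp h2
  simp only [ENNReal.toReal_one] at h4
  exact Tendsto.congr (fun t => (h1 t).symm) h4

lemma cdf_tendsto_atBot : Tendsto stdGaussCDF atBot (nhds 0) := by
  have : ∀ t, stdGaussCDF t = 1 - stdGaussCDF (-t) := by
    intro t; rw [cdf_symm]; ring
  have h := (cdf_tendsto_atTop.comp tendsto_neg_atBot_atTop).const_sub 1
  simp only [sub_self] at h
  exact Tendsto.congr (fun t => (this t).symm) h

lemma cdf_pos (t : ℝ) : 0 < stdGaussCDF t :=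
  lt_of_le_of_lt (cdf_nonneg (t - 1)) (cdf_strictMono (by linarith))

lemma cdf_lt_one (t : ℝ) : stdGaussCDF t < 1 :=
  lt_of_lt_of_le (cdf_strictMono (show t < t + 1 by linarith)) (cdf_le_one (t + 1))

lemma cdf_surj {p : ℝ} (h0 : 0 < p) (h1 : p < 1) : ∃ t, stdGaussCDF t = p := by
  obtain ⟨a, ha⟩ := (cdf_tendsto_atBot.eventually_lt_const h0).exists
  obtain ⟨b, hb⟩ := (cdf_tendsto_atTop.eventually_const_lt h1).exists
  have := intermediate_value_univ a b cdf_cont (Set.mem_Icc.mpr ⟨ha.le, hb.le⟩)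
  exact this

lemma quantile_cdf (t : ℝ) : stdGaussQuantile (stdGaussCDF t) = t :=
  Function.leftInverse_invFun cdf_strictMono.injective t

lemma cdf_quantile {p : ℝ} (h0 : 0 < p) (h1 : p < 1) : stdGaussCDF (stdGaussQuantile p) = p :=
  Function.invFun_eq (cdf_surj h0 h1)

lemma hasDerivAt_pdf (t : ℝ) : HasDerivAt stdGaussPDF (-t * stdGaussPDF t) t := by
  have h1 : HasDerivAt (fun u : ℝ => -(u ^ 2) / 2) (-t) t := by
    have := ((hasDerivAt_pow 2 t).neg.div_const 2)
    refine this.congr_deriv ?_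
    simp; ring
  have h2 := (h1.exp).const_mul ((Real.sqrt (2 * Real.pi))⁻¹)
  have : stdGaussPDF = fun u => (Real.sqrt (2 * Real.pi))⁻¹ * Real.exp (-(u ^ 2) / 2) := rfl
  rw [this]
  refine h2.congr_deriv ?_
  simp [stdGaussPDF]; ring

lemma pdf_tendsto_atTop : Tendsto stdGaussPDF atTop (nhds 0) := by
  have h1 : Tendsto (fun t : ℝ => -(t ^ 2) / 2) atTop atBot := by
    apply Tendsto.atBot_div_const (by norm_num : (0:ℝ) < 2)
    exact tendsto_neg_atTop_atBot.comp (tendsto_pow_atTop two_ne_zero)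
  have h2 := (Real.tendsto_exp_atBot.comp h1).const_mul ((Real.sqrt (2 * Real.pi))⁻¹)
  rw [mul_zero] at h2
  exact h2

lemma pdf_tendsto_atBot : Tendsto stdGaussPDF atBot (nhds 0) := by
  have he : ∀ t, stdGaussPDF t = stdGaussPDF (-t) := fun t => by simp [stdGaussPDF]
  have h := pdf_tendsto_atTop.comp tendsto_neg_atBot_atTop
  exact Tendsto.congr (fun t => (he t).symm) h

lemma g_hasDeriv (a t : ℝ) :
    HasDerivAt (fun u => a * stdGaussCDF u + stdGaussPDF u) ((a - t) * stdGaussPDF t) t := by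
  have h := ((hasDerivAt_cdf t).const_mul a).add (hasDerivAt_pdf t)
  refine h.congr_deriv ?_; ring

lemma g_le (a t : ℝ) :
    a * stdGaussCDF t + stdGaussPDF t ≤ a * stdGaussCDF a + stdGaussPDF a := by
  set g : ℝ → ℝ := fun u => a * stdGaussCDF u + stdGaussPDF u with hg
  have hdiff : Differentiable ℝ g := fun x => (g_hasDeriv a x).differentiableAt
  rcases le_total t a with h | h
  · have hm : MonotoneOn g (Set.Icc t a) := by
      apply monotoneOn_of_deriv_nonneg (convex_Icc t a) hdiff.continuous.continuousOn
        (fun x _ => (hdiff x).differentiableWithinAt)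
      intro x hx
      rw [interior_Icc] at hx
      rw [(g_hasDeriv a x).deriv]
      exact mul_nonneg (by linarith [hx.2]) (pdf_pos x).le
    exact hm (Set.mem_Icc.mpr ⟨le_refl t, h⟩) (Set.mem_Icc.mpr ⟨h, le_refl a⟩) h
  · have hm : AntitoneOn g (Set.Icc a t) := by
      apply antitoneOn_of_deriv_nonpos (convex_Icc a t) hdiff.continuous.continuousOn
        (fun x _ => (hdiff x).differentiableWithinAt)
      intro x hx
      rw [interior_Icc] at hx
      rw [(g_hasDeriv a x).deriv]
      exact mul_nonpos_of_nonpos_of_nonneg (by linarith [hx.1]) (pdf_pos x).le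
    exact hm (Set.mem_Icc.mpr ⟨le_refl a, h⟩) (Set.mem_Icc.mpr ⟨h, le_refl t⟩) h

lemma g_nonneg (a : ℝ) : 0 ≤ a * stdGaussCDF a + stdGaussPDF a := by
  have hlim : Tendsto (fun t => a * stdGaussCDF t + stdGaussPDF t) atBot (nhds 0) := by
    have := (cdf_tendsto_atBot.const_mul a).add pdf_tendsto_atBot
    simpa using this
  exact le_of_tendsto' hlim (fun t => g_le a t)

lemma g_ge_a (a : ℝ) : a ≤ a * stdGaussCDF a + stdGaussPDF a := by
  have hlim : Tendsto (fun t => a * stdGaussCDF t + stdGaussPDF t) atTop (nhds a) := by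
    have := (cdf_tendsto_atTop.const_mul a).add pdf_tendsto_atTop
    simpa using this
  exact le_of_tendsto' hlim (fun t => g_le a t)

/-- For a standard normal `ε`: `P(z + σ·ε > 0) = Φ(z/σ)`, and consequently `Φ(z/σ)` maximises
`p ↦ p·z + σ·φ(Φ⁻¹(p))` over `[0,1]`. -/
theorem gaussian_gate_weighted (z σ : ℝ) (hσ : 0 < σ) :
    (gaussianReal 0 1 {y : ℝ | 0 < z + σ * y}).toReal = stdGaussCDF (z / σ) ∧
    stdGaussCDF (z / σ) ∈ Set.Icc (0 : ℝ) 1 ∧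
    IsMaxOn (fun p : ℝ => p * z + σ * probitReg p) (Set.Icc (0 : ℝ) 1)
      (stdGaussCDF (z / σ)) := by
  set a := z / σ with ha
  have hza : z = σ * a := by rw [ha]; field_simp
  have hpart1 : (gaussianReal 0 1 {y : ℝ | 0 < z + σ * y}).toReal = stdGaussCDF a := by
    have hset : {y : ℝ | 0 < z + σ * y} = Set.Ioi (-a) := by
      ext y
      simp only [Set.mem_setOf_eq, Set.mem_Ioi]
      rw [neg_lt, ha, lt_div_iff₀ hσ]
      constructor <;> intro h <;> nlinarith
    rw [hset, measure_toReal]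
    have h3 := cdf_add_Ioi (-a)
    have h4 := cdf_symm a
    have : (∫ x in Set.Ioi (-a), stdGaussPDF x) = 1 - stdGaussCDF (-a) := by linarith
    rw [this, h4]; ring
  refine ⟨hpart1, ⟨cdf_nonneg a, cdf_le_one a⟩, ?_⟩
  have hp0 := cdf_pos a
  have hp1 := cdf_lt_one a
  intro p hp
  have hreg : probitReg (stdGaussCDF a) = stdGaussPDF a := by
    rw [probitReg, if_neg (by push_neg; exact ⟨hp0, hp1⟩), quantile_cdf]
  show p * z + σ * probitReg p ≤ stdGaussCDF a * z + σ * probitReg (stdGaussCDF a)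
  have hga : stdGaussCDF a * z + σ * stdGaussPDF a
      = σ * (a * stdGaussCDF a + stdGaussPDF a) := by rw [hza]; ring
  rw [hreg, hga]
  by_cases hle : p ≤ 0 ∨ 1 ≤ p
  · have hpr : probitReg p = 0 := by rw [probitReg, if_pos hle]
    rcases hle with h | h
    · have hp' : p = 0 := le_antisymm h hp.1
      rw [hpr, hp']
      have := mul_nonneg hσ.le (g_nonneg a)
      simpa using this
    · have hp' : p = 1 := le_antisymm hp.2 h
      rw [hpr, hp', hza]
      have := mul_le_mul_of_nonneg_left (g_ge_a a) hσ.le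
      simpa using this
  · push_neg at hle
    have hcq := cdf_quantile hle.1 hle.2
    set t := stdGaussQuantile p with ht
    have hpr : probitReg p = stdGaussPDF t := by rw [probitReg, if_neg (by push_neg; exact hle)]
    rw [hpr]
    have heq : p * z + σ * stdGaussPDF t = σ * (a * stdGaussCDF t + stdGaussPDF t) := by
      rw [← hcq, hza]; ring
    rw [heq]
    exact mul_le_mul_of_nonneg_left (g_le a t) hσ.le

end
end

section
/- In the η = 1 Mixing decomposition of a ReLU network with input convention a^{(0,±)}_k(x) = x_k^±, the decomposed activations a^{(l,+,1)}_i(x) = max(z^{(l,+)}_i(x), z^{(l,-)}_i(x)) and a^{(l,-,1)}_i(x) = z^{(l,-)}_i(x) are both convex functions of the network input x, at every layer l and neuron i. Consequently the network activation a^{(l)}_i = a^{(l,+,1)}_i - a^{(l,-,1)}_i is exhibited as a difference of convex functions. -/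
open Finset

noncomputable section

/-- Positive part of a real number. -/
def pPart (u : ℝ) : ℝ := max u 0

/-- Negative part of a real number. -/
def nPart (u : ℝ) : ℝ := max (-u) 0

/-- Activations of a feedforward ReLU network. -/
def netAct (n : ℕ → ℕ) (W : ∀ l, Fin (n (l + 1)) → Fin (n l) → ℝ)
    (b : ∀ l, Fin (n (l + 1)) → ℝ) (x : Fin (n 0) → ℝ) : ∀ l, Fin (n l) → ℝ
  | 0 => x
  | (l + 1) => fun i => max (b l i + ∑ j, W l i j * netAct n W b x l j) 0

/-- Mixing-decomposition activation pairs with parameter `η`. -/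
def mixPair (n : ℕ → ℕ) (W : ∀ l, Fin (n (l + 1)) → Fin (n l) → ℝ)
    (b : ∀ l, Fin (n (l + 1)) → ℝ) (η : ℝ) (x : Fin (n 0) → ℝ) :
    ∀ l, Fin (n l) → ℝ × ℝ
  | 0 => fun k => (pPart (x k), nPart (x k))
  | (l + 1) => fun i =>
      let zp := pPart (b l i) + ∑ j, (pPart (W l i j) * (mixPair n W b η x l j).1 +
        nPart (W l i j) * (mixPair n W b η x l j).2)
      let zm := nPart (b l i) + ∑ j, (pPart (W l i j) * (mixPair n W b η x l j).2 +
        nPart (W l i j) * (mixPair n W b η x l j).1)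
      (η * max zp zm + (1 - η) * zp, η * zm + (1 - η) * min zp zm)

lemma pPart_nonneg (u : ℝ) : 0 ≤ pPart u := le_max_right _ _
lemma nPart_nonneg (u : ℝ) : 0 ≤ nPart u := le_max_right _ _
lemma pPart_sub_nPart (u : ℝ) : pPart u - nPart u = u := by
  unfold pPart nPart
  rcases le_total u 0 with h | h
  · rw [max_eq_right h, max_eq_left (neg_nonneg.2 h)]; ring
  · rw [max_eq_left h, max_eq_right (neg_nonpos.2 h)]; ring

lemma convexOn_max {E : Type*} [AddCommGroup E] [Module ℝ E] {f g : E → ℝ}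
    (hf : ConvexOn ℝ Set.univ f) (hg : ConvexOn ℝ Set.univ g) :
    ConvexOn ℝ Set.univ fun x => max (f x) (g x) := hf.sup hg

lemma convexOn_fsum {E ι : Type*} [AddCommGroup E] [Module ℝ E] (s : Finset ι)
    (f : ι → E → ℝ) (h : ∀ j ∈ s, ConvexOn ℝ Set.univ (f j)) :
    ConvexOn ℝ Set.univ fun x => ∑ j ∈ s, f j x := by
  classical
  induction s using Finset.induction with
  | empty => simpa using convexOn_const (0:ℝ) convex_univ
  | insert _ _ hj ih =>
    simp only [Finset.sum_insert hj]
    exact (h _ (Finset.mem_insert_self _ _)).add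
      (ih fun j hj' => h j (Finset.mem_insert_of_mem hj'))

lemma mixing_aux (n : ℕ → ℕ)
    (W : ∀ l, Fin (n (l + 1)) → Fin (n l) → ℝ)
    (b : ∀ l, Fin (n (l + 1)) → ℝ) : ∀ l, ∀ i : Fin (n l),
    ConvexOn ℝ Set.univ (fun x : Fin (n 0) → ℝ => (mixPair n W b 1 x l i).1) ∧
    ConvexOn ℝ Set.univ (fun x : Fin (n 0) → ℝ => (mixPair n W b 1 x l i).2) ∧
    (∀ x : Fin (n 0) → ℝ,
      (mixPair n W b 1 x l i).1 - (mixPair n W b 1 x l i).2 = netAct n W b x l i) := by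
  intro l
  induction l with
  | zero =>
    intro k
    have hproj : ConvexOn ℝ Set.univ (fun x : Fin (n 0) → ℝ => x k) := by
      refine ⟨convex_univ, fun x _ y _ a c ha hc hab => le_of_eq ?_⟩
      simp
    have hnproj : ConvexOn ℝ Set.univ (fun x : Fin (n 0) → ℝ => -(x k)) := by
      refine ⟨convex_univ, fun x _ y _ a c ha hc hab => le_of_eq ?_⟩
      simp [smul_eq_mul]; ring
    refine ⟨?_, ?_, ?_⟩
    · exact convexOn_max hproj (convexOn_const 0 convex_univ)
    · exact convexOn_max hnproj (convexOn_const 0 convex_univ)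
    · intro x; exact pPart_sub_nPart (x k)
  | succ l ih =>
    intro i
    set Zp : (Fin (n 0) → ℝ) → ℝ := fun x =>
      pPart (b l i) + ∑ j, (pPart (W l i j) * (mixPair n W b 1 x l j).1 +
        nPart (W l i j) * (mixPair n W b 1 x l j).2) with hZp
    set Zm : (Fin (n 0) → ℝ) → ℝ := fun x =>
      nPart (b l i) + ∑ j, (pPart (W l i j) * (mixPair n W b 1 x l j).2 +
        nPart (W l i j) * (mixPair n W b 1 x l j).1) with hZm
    have h1 : ∀ x, (mixPair n W b 1 x (l+1) i).1 = max (Zp x) (Zm x) := by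
      intro x; simp [mixPair, hZp, hZm]
    have h2 : ∀ x, (mixPair n W b 1 x (l+1) i).2 = Zm x := by
      intro x; simp [mixPair, hZm]
    have hZpc : ConvexOn ℝ Set.univ Zp := by
      refine (convexOn_const _ convex_univ).add (convexOn_fsum _ _ fun j _ => ?_)
      exact ((ih j).1.smul (pPart_nonneg _)).add ((ih j).2.1.smul (nPart_nonneg _))
    have hZmc : ConvexOn ℝ Set.univ Zm := by
      refine (convexOn_const _ convex_univ).add (convexOn_fsum _ _ fun j _ => ?_)
      exact ((ih j).2.1.smul (pPart_nonneg _)).add ((ih j).1.smul (nPart_nonneg _))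
    have hdiff : ∀ x, Zp x - Zm x = b l i + ∑ j, W l i j * netAct n W b x l j := by
      intro x
      have : ∀ j, (pPart (W l i j) * (mixPair n W b 1 x l j).1 +
          nPart (W l i j) * (mixPair n W b 1 x l j).2) -
          (pPart (W l i j) * (mixPair n W b 1 x l j).2 +
          nPart (W l i j) * (mixPair n W b 1 x l j).1) = W l i j * netAct n W b x l j := by
        intro j
        have h := (ih j).2.2 x
        have hw := pPart_sub_nPart (W l i j)
        linear_combination ((mixPair n W b 1 x l j).1 - (mixPair n W b 1 x l j).2) * hw + W l i j * h
      simp only [hZp, hZm]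
      rw [add_sub_add_comm, ← Finset.sum_sub_distrib, pPart_sub_nPart]
      congr 1
      exact Finset.sum_congr rfl fun j _ => this j
    refine ⟨?_, ?_, ?_⟩
    · simp only [h1]; exact convexOn_max hZpc hZmc
    · simp only [h2]; exact hZmc
    · intro x
      rw [h1, h2, ← max_sub_sub_right, sub_self, hdiff]
      rfl


/-- At `η = 1`, both Mixing-decomposition activations are convex functions of the network
input `x` at every layer and neuron; consequently the ReLU network activation is exhibited
as a difference of convex functions. -/
theorem mixing_eta_one_convex (n : ℕ → ℕ)
    (W : ∀ l, Fin (n (l + 1)) → Fin (n l) → ℝ)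
    (b : ∀ l, Fin (n (l + 1)) → ℝ) (l : ℕ) (i : Fin (n l)) :
    ConvexOn ℝ Set.univ (fun x : Fin (n 0) → ℝ => (mixPair n W b 1 x l i).1) ∧
    ConvexOn ℝ Set.univ (fun x : Fin (n 0) → ℝ => (mixPair n W b 1 x l i).2) ∧
    (∀ x : Fin (n 0) → ℝ,
      (mixPair n W b 1 x l i).1 - (mixPair n W b 1 x l i).2 = netAct n W b x l i) := by
  exact mixing_aux n W b l i

end
end
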